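/- Let u : [0,1] × [0,1] → ℝ satisfy the pairwise signed-ratio conditions: for all a, θ, θ': u(a,θ) = 0 implies u_a(a,θ) < 0, and u(a,θ) < 0 < u(a,θ') implies u(a,θ') u_a(a,θ) − u(a,θ) u_a(a,θ') < 0. Then for all a ∈ [0,1], all θ, θ' ∈ [0,1], and all ρ ∈ [0,1]: if ρ·u(a,θ) + (1−ρ)·u(a,θ') = 0 then ρ·u_a(a,θ) + (1−ρ)·u_a(a,θ') < 0. -/
import Mathlib

/-- The pairwise signed-ratio conditions imply the two-point case of strict aggregate
quasi-concavity. -/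
theorem stmt_3 (u ua : ℝ → ℝ → ℝ)
    (h1 : ∀ a ∈ Set.Icc (0:ℝ) 1, ∀ θ ∈ Set.Icc (0:ℝ) 1, u a θ = 0 → ua a θ < 0)
    (h2 : ∀ a ∈ Set.Icc (0:ℝ) 1, ∀ θ ∈ Set.Icc (0:ℝ) 1, ∀ θ' ∈ Set.Icc (0:ℝ) 1,
      u a θ < 0 → 0 < u a θ' → u a θ' * ua a θ - u a θ * ua a θ' < 0) :
    ∀ a ∈ Set.Icc (0:ℝ) 1, ∀ θ ∈ Set.Icc (0:ℝ) 1, ∀ θ' ∈ Set.Icc (0:ℝ) 1,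
      ∀ ρ ∈ Set.Icc (0:ℝ) 1,
        ρ * u a θ + (1 - ρ) * u a θ' = 0 →
        ρ * ua a θ + (1 - ρ) * ua a θ' < 0 := by
  intro a ha θ hθ θ' hθ' ρ hρ hsum
  obtain ⟨hρ0, hρ1⟩ := hρ
  rcases eq_or_lt_of_le hρ0 with h0 | h0
  · subst h0
    simp only [zero_mul, sub_zero, one_mul, zero_add] at hsum ⊢
    exact h1 a ha θ' hθ' hsum
  rcases eq_or_lt_of_le hρ1 with h1' | h1'
  · subst h1'
    simp only [one_mul, sub_self, zero_mul, add_zero] at hsum ⊢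
    exact h1 a ha θ hθ hsum
  rcases lt_trichotomy (u a θ) 0 with hx | hx | hx
  · have hy : 0 < u a θ' := by nlinarith
    have hk := h2 a ha θ hθ θ' hθ' hx hy
    have key : u a θ' * (ρ * ua a θ + (1 - ρ) * ua a θ')
        = ρ * (u a θ' * ua a θ - u a θ * ua a θ') + ua a θ' * (ρ * u a θ + (1 - ρ) * u a θ') := by
      ring
    rw [hsum, mul_zero, add_zero] at key
    have h3 : u a θ' * (ρ * ua a θ + (1 - ρ) * ua a θ') < 0 := by
      rw [key]; exact mul_neg_of_pos_of_neg h0 hk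
    exact neg_of_mul_neg_right h3 hy.le
  · have hy : u a θ' = 0 := by nlinarith
    have h1a := h1 a ha θ hθ hx
    have h1b := h1 a ha θ' hθ' hy
    nlinarith
  · have hy : u a θ' < 0 := by nlinarith
    have hk := h2 a ha θ' hθ' θ hθ hy hx
    have key : u a θ * (ρ * ua a θ + (1 - ρ) * ua a θ')
        = (1 - ρ) * (u a θ * ua a θ' - u a θ' * ua a θ) + ua a θ * (ρ * u a θ + (1 - ρ) * u a θ') := by
      ring
    rw [hsum, mul_zero, add_zero] at key
    have h3 : u a θ * (ρ * ua a θ + (1 - ρ) * ua a θ') < 0 := by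
      rw [key]; exact mul_neg_of_pos_of_neg (by linarith) hk
    exact neg_of_mul_neg_right h3 hx.le
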